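/- An introspective (transitive and Euclidean) and initially synchronous ETL forest has PR (PR_ee and PR_hcl) if and only if it has PR_hcl. -/

import Mathlib

attribute [local instance] Classical.propDecidable

/-- A protocol is a prefix-closed set of histories. -/
def PrefixClosed {E : Type*} (H : Set (List E)) : Prop :=
  ∀ g h : List E, g <+: h → h ∈ H → g ∈ H

/-- Perfect recall with respect to history consistency. -/
def PRhc {E : Type*} (H : Set (List E)) (sim : List E → List E → Prop) : Prop :=
  ∀ (h h' : List E) (e : E), h ∈ H → h ++ [e] ∈ H → h' ∈ H → sim (h ++ [e]) h' →
    ∃ h'', h'' ∈ H ∧ sim h h'' ∧ h'' <+: h'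

/-- Perfect recall with respect to history consistency, local version. -/
def PRhcl {E : Type*} (H : Set (List E)) (sim : List E → List E → Prop) : Prop :=
  ∀ (h h' : List E) (e : E), h ∈ H → h ++ [e] ∈ H → h' ∈ H → sim (h ++ [e]) h' →
    sim h h' ∨
    (∃ (h'' : List E) (e'' : E), h'' ∈ H ∧ sim h h'' ∧ h' = h'' ++ [e'']) ∨
    (∃ (h'' : List E) (e'' : E), h'' ∈ H ∧ sim (h ++ [e]) h'' ∧ h' = h'' ++ [e''])

/-- The information set of a history. -/
def infoSet {E : Type*} (H : Set (List E)) (sim : List E → List E → Prop) (h : List E) :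
    Set (List E) := {h' | h' ∈ H ∧ sim h h'}

/-- The epistemic experience along a history (information sets over all prefixes, in order),
with consecutive repetitions of identical sets removed (destuttered). -/
noncomputable def EEd {E : Type*} (H : Set (List E)) (sim : List E → List E → Prop)
    (h : List E) : List (Set (List E)) :=
  ((List.range (h.length + 1)).map fun n => infoSet H sim (h.take n)).destutter (· ≠ ·)

/-- Perfect recall with respect to epistemic experience: accessible histories have
equivalent epistemic experiences modulo stutterings. -/
def PRee {E : Type*} (H : Set (List E)) (sim : List E → List E → Prop) : Prop :=
  ∀ h h' : List E, h ∈ H → h' ∈ H → sim h h' → EEd H sim h = EEd H sim h'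

def TransOn {E : Type*} (H : Set (List E)) (sim : List E → List E → Prop) : Prop :=
  ∀ a b c : List E, a ∈ H → b ∈ H → c ∈ H → sim a b → sim b c → sim a c

def EuclOn {E : Type*} (H : Set (List E)) (sim : List E → List E → Prop) : Prop :=
  ∀ a b c : List E, a ∈ H → b ∈ H → c ∈ H → sim a b → sim a c → sim b c

/-- S5: the accessibility relation is an equivalence relation on the protocol. -/
def S5on {E : Type*} (H : Set (List E)) (sim : List E → List E → Prop) : Prop :=
  (∀ h ∈ H, sim h h) ∧ (∀ h h' : List E, sim h h' → sim h' h) ∧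
    (∀ a b c : List E, sim a b → sim b c → sim a c)

/-- Synchronous perfect recall. -/
def sPR {E : Type*} (H : Set (List E)) (sim : List E → List E → Prop) : Prop :=
  ∀ (h h' : List E) (e : E), h ∈ H → h ++ [e] ∈ H → h' ∈ H → sim (h ++ [e]) h' →
    ∃ (h'' : List E) (e' : E), h'' ∈ H ∧ sim h h'' ∧ h' = h'' ++ [e']

/-- Weak synchronous perfect recall. -/
def wsPR {E : Type*} (H : Set (List E)) (sim : List E → List E → Prop) : Prop :=
  ∀ (h h' : List E) (e e' : E), h ∈ H → h' ∈ H → h ++ [e] ∈ H → h' ++ [e'] ∈ H →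
    sim (h ++ [e]) (h' ++ [e']) → sim h h'

/-- The reflexive-symmetric closure (= S5 closure on introspective frames). -/
def S5cl {E : Type*} (sim : List E → List E → Prop) (h h' : List E) : Prop :=
  h = h' ∨ sim h h' ∨ sim h' h

def PersistentInsanity {E : Type*} (H : Set (List E)) (sim : List E → List E → Prop) : Prop :=
  ∀ h h' : List E, h ∈ H → h' ∈ H → infoSet H sim h = ∅ → h <+: h' → infoSet H sim h' = ∅

/-- An ETL forest: a set of roots inside the protocol, every history descends from a
root, and the protocol is prefix-closed above roots. -/
def ForestFrame {E : Type*} (H Roots : Set (List E)) : Prop :=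
  Roots ⊆ H ∧ (∀ h ∈ H, ∃ r ∈ Roots, r <+: h) ∧
    (∀ h ∈ H, ∀ r g : List E, r ∈ Roots → r <+: g → g <+: h → g ∈ H)

/-- Initial synchronicity: if a root is accessible to some history, it is accessible
to that history's root. -/
def InitSync {E : Type*} (H Roots : Set (List E)) (sim : List E → List E → Prop) : Prop :=
  ∀ r r' h : List E, r ∈ Roots → r' ∈ Roots → h ∈ H → r <+: h → sim r' h → sim r' r

/-- Epistemic experience in a forest, from root r along h, destuttered. -/
noncomputable def EEdF {E : Type*} (H : Set (List E)) (sim : List E → List E → Prop)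
    (r h : List E) : List (Set (List E)) :=
  ((List.range (h.length - r.length + 1)).map
    fun n => infoSet H sim (h.take (r.length + n))).destutter (· ≠ ·)

/-- PR_ee for forests. -/
def PReeF {E : Type*} (H Roots : Set (List E)) (sim : List E → List E → Prop) : Prop :=
  ∀ h h' r r' : List E, h ∈ H → h' ∈ H → r ∈ Roots → r' ∈ Roots →
    r <+: h → r' <+: h' → sim h h' → EEdF H sim r h = EEdF H sim r' h'

section PRAux

variable {E : Type*} {H Roots : Set (List E)} {sim : List E → List E → Prop}

private lemma destutter'_concat_ne {α : Type*} (l : List α) :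
    ∀ b a : α,
      (l ++ [a]).destutter' (· ≠ ·) b =
        if l.getLastD b ≠ a then l.destutter' (· ≠ ·) b ++ [a]
        else l.destutter' (· ≠ ·) b := by
  induction l with
  | nil =>
    intro b a
    simp only [List.nil_append, List.destutter'_singleton, List.destutter'_nil,
      List.getLastD_nil]
    split_ifs <;> simp_all
  | cons c t ih =>
    intro b a
    rw [List.cons_append, List.destutter'_cons, List.destutter'_cons, List.getLastD_cons,
      ih c a, ih b a]
    by_cases h : b ≠ c
    · simp only [if_pos h]
      split_ifs <;> simp
    · have hbc : b = c := not_ne_iff.mp h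
      subst hbc
      simp only [if_neg h]

private lemma destutter_concat_ne {α : Type*} (l : List α) (b a : α) :
    ((l ++ [b]) ++ [a]).destutter (· ≠ ·) =
      if b ≠ a then (l ++ [b]).destutter (· ≠ ·) ++ [a]
      else (l ++ [b]).destutter (· ≠ ·) := by
  cases l with
  | nil =>
    simp only [List.nil_append, List.singleton_append, List.destutter_cons',
      List.destutter'_singleton, List.destutter_singleton]
    split_ifs <;> rfl
  | cons c t =>
    rw [List.cons_append, List.cons_append, List.destutter_cons', List.destutter_cons',
      destutter'_concat_ne, List.getLastD_concat]

private lemma mem_info {a x : List E} : x ∈ infoSet H sim a ↔ x ∈ H ∧ sim a x := Iff.rfl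

private lemma info_eq (ht : TransOn H sim) (he : EuclOn H sim) {a b : List E}
    (ha : a ∈ H) (hb : b ∈ H) (hab : sim a b) : infoSet H sim a = infoSet H sim b := by
  ext x
  simp only [mem_info]
  constructor
  · rintro ⟨hx, hax⟩
    exact ⟨hx, he a b x ha hb hx hab hax⟩
  · rintro ⟨hx, hbx⟩
    exact ⟨hx, ht a b x ha hb hx hab hbx⟩

private lemma EEdF_root (H : Set (List E)) (sim : List E → List E → Prop) (r : List E) :
    EEdF H sim r r = [infoSet H sim r] := by
  unfold EEdF
  rw [Nat.sub_self]
  simp only [List.range_succ, List.range_zero, List.nil_append, List.map_cons, List.map_nil,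
    Nat.add_zero, List.take_length, List.destutter_singleton]

private lemma EEdF_concat (H : Set (List E)) (sim : List E → List E → Prop)
    (r g : List E) (e : E) (hrg : r.length ≤ g.length) :
    EEdF H sim r (g ++ [e]) =
      if infoSet H sim g ≠ infoSet H sim (g ++ [e]) then
        EEdF H sim r g ++ [infoSet H sim (g ++ [e])]
      else EEdF H sim r g := by
  have hlen : (g ++ [e]).length - r.length + 1 = (g.length - r.length) + 1 + 1 := by
    simp only [List.length_append, List.length_singleton]
    omega
  have h1 : ∀ n ∈ List.range (g.length - r.length),
      infoSet H sim ((g ++ [e]).take (r.length + n)) = infoSet H sim (g.take (r.length + n)) := by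
    intro n hn
    rw [List.mem_range] at hn
    rw [List.take_append_of_le_length (by omega)]
  have h2 : (g ++ [e]).take (r.length + (g.length - r.length)) = g := by
    rw [List.take_append_of_le_length (by omega)]
    have : r.length + (g.length - r.length) = g.length := by omega
    rw [this, List.take_length]
  have h3 : (g ++ [e]).take (r.length + (g.length - r.length + 1)) = g ++ [e] := by
    have : r.length + (g.length - r.length + 1) = (g ++ [e]).length := by
      simp only [List.length_append, List.length_singleton]; omega
    rw [this, List.take_length]
  unfold EEdF
  rw [hlen, List.range_succ, List.map_append, List.range_succ, List.map_append,
    List.map_singleton, List.map_singleton, h2, h3, List.map_congr_left h1]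
  erw [destutter_concat_ne]
  have h4 : g.take (r.length + (g.length - r.length)) = g := by
    have : r.length + (g.length - r.length) = g.length := by omega
    rw [this, List.take_length]
  rw [List.map_append, List.map_singleton, h4]
  congr 1

end PRAux

section PRMain

variable {E : Type*} {H Roots : Set (List E)} {sim : List E → List E → Prop}

private lemma gstar (hF : ForestFrame H Roots) (hsync : InitSync H Roots sim)
    (ht : TransOn H sim) (he : EuclOn H sim) (hcl : PRhcl H sim) :
    ∀ n : ℕ, ∀ u w : List E, ∀ f : E, u.length ≤ n → u ∈ H → w ∈ H → u = w ++ [f] →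
      sim u u → (∃ t ∈ Roots, sim u t) → infoSet H sim w = infoSet H sim u := by
  intro n
  induction n with
  | zero =>
    intro u w f hlen _ _ hdec _ _
    subst hdec
    simp at hlen
  | succ n IH =>
    rintro u w f hlen hu hw hdec husim ⟨t, htR, hut⟩
    have htH : t ∈ H := hF.1 htR
    have hIut : infoSet H sim u = infoSet H sim t := info_eq ht he hu htH hut
    have htu : sim t u := by
      have hmem : u ∈ infoSet H sim u := mem_info.mpr ⟨hu, husim⟩
      rw [hIut] at hmem
      exact (mem_info.mp hmem).2
    obtain ⟨t₂, ht₂R, ht₂w⟩ := hF.2.1 w hw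
    have ht₂H : t₂ ∈ H := hF.1 ht₂R
    have ht₂u : t₂ <+: u := hdec ▸ ht₂w.trans (List.prefix_append w [f])
    have htt₂ : sim t t₂ := hsync t₂ t u ht₂R htR hu ht₂u htu
    have hut₂ : sim u t₂ := ht u t t₂ hu htH ht₂H hut htt₂
    have huH : w ++ [f] ∈ H := hdec ▸ hu
    have loop : ∀ m : ℕ, ∀ z : List E, z.length ≤ m → z ∈ H → sim u z →
        z.length < u.length → infoSet H sim w = infoSet H sim u := by
      intro m
      induction m with
      | zero =>
        intro z hzlen hz huz _
        have hz0 : z = [] := List.length_eq_zero_iff.mp (Nat.le_zero.mp hzlen)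
        rcases hcl w z f hw huH hz (by rw [← hdec]; exact huz) with
          hwz | ⟨z', f₂, hz', _, hdz⟩ | ⟨z', f₂, hz', _, hdz⟩
        · exact (info_eq ht he hw hz hwz).trans (info_eq ht he hu hz huz).symm
        · subst hz0; simp at hdz
        · subst hz0; simp at hdz
      | succ m IHm =>
        intro z hzlen hz huz hzu
        rcases hcl w z f hw huH hz (by rw [← hdec]; exact huz) with
          hwz | ⟨z', f₂, hz', hwz', hdz⟩ | ⟨z', f₂, hz', huz', hdz⟩
        · exact (info_eq ht he hw hz hwz).trans (info_eq ht he hu hz huz).symm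
        · have hzz : sim z z := he u z z hu hz hz huz huz
          have hzt₂ : sim z t₂ := he u z t₂ hu hz ht₂H huz hut₂
          have hIz : infoSet H sim z' = infoSet H sim z :=
            IH z z' f₂ (by omega) hz hz' hdz hzz ⟨t₂, ht₂R, hzt₂⟩
          calc infoSet H sim w = infoSet H sim z' := info_eq ht he hw hz' hwz'
            _ = infoSet H sim z := hIz
            _ = infoSet H sim u := (info_eq ht he hu hz huz).symm
        · have huz'' : sim u z' := by rw [hdec]; exact huz'
          have hlz : z'.length ≤ m := by
            have : z.length = z'.length + 1 := by rw [hdz]; simp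
            omega
          exact IHm z' hlz hz' huz'' (by
            have : z.length = z'.length + 1 := by rw [hdz]; simp
            omega)
    have hwltu : w.length < u.length := by rw [hdec]; simp
    exact loop t₂.length t₂ le_rfl ht₂H hut₂ (lt_of_le_of_lt ht₂w.length_le hwltu)

private lemma dlem (hF : ForestFrame H Roots) (hsync : InitSync H Roots sim)
    (ht : TransOn H sim) (he : EuclOn H sim) (hcl : PRhcl H sim) :
    ∀ m : ℕ, ∀ z x v : List E, ∀ f : E, z.length ≤ m → x ∈ H → v ∈ H → x = v ++ [f] →
      z ∈ H → sim x z → (∃ t ∈ Roots, sim x t) → infoSet H sim v = infoSet H sim x := by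
  intro m
  induction m with
  | zero =>
    rintro z x v f hzlen hx hv hdx hz hxz _
    have hz0 : z = [] := List.length_eq_zero_iff.mp (Nat.le_zero.mp hzlen)
    rcases hcl v z f hv (hdx ▸ hx) hz (by rw [← hdx]; exact hxz) with
      hvz | ⟨z', f₂, _, _, hdz⟩ | ⟨z', f₂, _, _, hdz⟩
    · exact (info_eq ht he hv hz hvz).trans (info_eq ht he hx hz hxz).symm
    · subst hz0; simp at hdz
    · subst hz0; simp at hdz
  | succ m IHm =>
    rintro z x v f hzlen hx hv hdx hz hxz ⟨t, htR, hxt⟩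
    rcases hcl v z f hv (hdx ▸ hx) hz (by rw [← hdx]; exact hxz) with
      hvz | ⟨z', f₂, hz', hvz', hdz⟩ | ⟨z', f₂, hz', hxz', hdz⟩
    · exact (info_eq ht he hv hz hvz).trans (info_eq ht he hx hz hxz).symm
    · have hzz : sim z z := he x z z hx hz hz hxz hxz
      have hzt : sim z t := he x z t hx hz (hF.1 htR) hxz hxt
      have hIz : infoSet H sim z' = infoSet H sim z :=
        gstar hF hsync ht he hcl z.length z z' f₂ le_rfl hz hz' hdz hzz ⟨t, htR, hzt⟩
      calc infoSet H sim v = infoSet H sim z' := info_eq ht he hv hz' hvz'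
        _ = infoSet H sim z := hIz
        _ = infoSet H sim x := (info_eq ht he hx hz hxz).symm
    · have hxz'' : sim x z' := by rw [hdx]; exact hxz'
      have hlz : z'.length ≤ m := by
        have : z.length = z'.length + 1 := by rw [hdz]; simp
        omega
      exact IHm z' x v f hlz hx hv hdx hz' hxz'' ⟨t, htR, hxt⟩

private lemma ksing (hF : ForestFrame H Roots) (hsync : InitSync H Roots sim)
    (ht : TransOn H sim) (he : EuclOn H sim) (hcl : PRhcl H sim) :
    ∀ n : ℕ, ∀ x t : List E, x.length ≤ n → t ∈ Roots → x ∈ H → t <+: x → sim x t →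
      EEdF H sim t x = [infoSet H sim x] := by
  intro n
  induction n with
  | zero =>
    intro x t hlen htR hx htx hxt
    have hx0 : x = [] := List.length_eq_zero_iff.mp (Nat.le_zero.mp hlen)
    have ht0 : t = [] := List.prefix_nil.mp (hx0 ▸ htx)
    subst hx0; subst ht0
    exact EEdF_root H sim []
  | succ n IHn =>
    intro x t hlen htR hx htx hxt
    by_cases hxe : x = t
    · subst hxe
      exact EEdF_root H sim x
    · obtain ⟨v, f, hdx⟩ : ∃ v f, x = v ++ [f] := by
        rcases List.eq_nil_or_concat x with h0 | ⟨v, f, h⟩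
        · subst h0
          exact absurd (List.prefix_nil.mp htx).symm hxe
        · exact ⟨v, f, by simpa [List.concat_eq_append] using h⟩
      have htv : t <+: v := by
        rcases List.prefix_concat_iff.mp (hdx ▸ htx) with h | h
        · exact absurd (h.trans hdx.symm) (Ne.symm hxe)
        · exact h
      have hv : v ∈ H := hF.2.2 x hx t v htR htv (hdx ▸ List.prefix_append v [f])
      have htH : t ∈ H := hF.1 htR
      have hIvx : infoSet H sim v = infoSet H sim x :=
        dlem hF hsync ht he hcl t.length t x v f le_rfl hx hv hdx htH hxt ⟨t, htR, hxt⟩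
      have hIxt : infoSet H sim x = infoSet H sim t := info_eq ht he hx htH hxt
      have htt : sim t t := he x t t hx htH htH hxt hxt
      have hvt : sim v t := by
        have hmem : t ∈ infoSet H sim v := by
          rw [hIvx, hIxt]; exact mem_info.mpr ⟨htH, htt⟩
        exact (mem_info.mp hmem).2
      have step : EEdF H sim t x = EEdF H sim t v := by
        rw [hdx, EEdF_concat H sim t v f htv.length_le, if_neg]
        rw [not_ne_iff, ← hdx]
        exact hIvx
      have hvlen : v.length ≤ n := by
        have : x.length = v.length + 1 := by rw [hdx]; simp
        omega
      rw [step, IHn v t hvlen htR hv htv hvt, hIvx]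

private lemma mainlem (hF : ForestFrame H Roots) (hsync : InitSync H Roots sim)
    (ht : TransOn H sim) (he : EuclOn H sim) (hcl : PRhcl H sim) :
    ∀ n : ℕ, ∀ h x r s : List E, h.length + x.length ≤ n →
      h ∈ H → x ∈ H → r ∈ Roots → s ∈ Roots → r <+: h → s <+: x → sim h x →
      EEdF H sim r h = EEdF H sim s x := by
  intro n
  induction n with
  | zero =>
    intro h x r s hlen hh hx hrR hsR hrh hsx hsim
    have hh0 : h = [] := List.length_eq_zero_iff.mp (by omega)
    have hx0 : x = [] := List.length_eq_zero_iff.mp (by omega)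
    have hr0 : r = [] := List.prefix_nil.mp (hh0 ▸ hrh)
    have hs0 : s = [] := List.prefix_nil.mp (hx0 ▸ hsx)
    subst hh0; subst hx0; subst hr0; subst hs0
    rfl
  | succ n IHn =>
    intro h x r s hlen hh hx hrR hsR hrh hsx hsim
    have hIhx : infoSet H sim h = infoSet H sim x := info_eq ht he hh hx hsim
    have hxx : sim x x := he h x x hh hx hx hsim hsim
    have hrH : r ∈ H := hF.1 hrR
    have hsH : s ∈ H := hF.1 hsR
    by_cases hhr : h = r
    · subst hhr
      have hrs : sim h s := hsync s h x hsR hrR hx hsx hsim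
      have hxs : sim x s := by
        have hmem : s ∈ infoSet H sim h := mem_info.mpr ⟨hsH, hrs⟩
        rw [hIhx] at hmem
        exact (mem_info.mp hmem).2
      rw [ksing hF hsync ht he hcl x.length x s le_rfl hsR hx hsx hxs, EEdF_root, hIhx]
    · obtain ⟨g, e, hdh⟩ : ∃ g e, h = g ++ [e] := by
        rcases List.eq_nil_or_concat h with h0 | ⟨g, e, hge⟩
        · subst h0
          exact absurd (List.prefix_nil.mp hrh).symm hhr
        · exact ⟨g, e, by simpa [List.concat_eq_append] using hge⟩
      have hrg : r <+: g := by
        rcases List.prefix_concat_iff.mp (hdh ▸ hrh) with h1 | h1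
        · exact absurd (h1.trans hdh.symm).symm hhr
        · exact h1
      have hg : g ∈ H := hF.2.2 h hh r g hrR hrg (hdh ▸ List.prefix_append g [e])
      have hglen : h.length = g.length + 1 := by rw [hdh]; simp
      by_cases hsxeq : s = x
      · -- x itself is a root seen by h
        have hIgh : infoSet H sim g = infoSet H sim h :=
          dlem hF hsync ht he hcl x.length x h g e le_rfl hh hg hdh hx hsim
            ⟨s, hsR, by rw [hsxeq]; exact hsim⟩
        have hgx : sim g x := by
          have hmem : x ∈ infoSet H sim g := by
            rw [hIgh, hIhx]; exact mem_info.mpr ⟨hx, hxx⟩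
          exact (mem_info.mp hmem).2
        have e1 : EEdF H sim r h = EEdF H sim r g := by
          rw [hdh, EEdF_concat H sim r g e hrg.length_le, if_neg]
          rw [not_ne_iff, ← hdh]
          exact hIgh
        rw [e1]
        exact IHn g x r s (by omega) hg hx hrR hsR hrg hsx hgx
      · rcases hcl g x e hg (hdh ▸ hh) hx (by rw [← hdh]; exact hsim) with
          hgx | ⟨w, f, hwH, hgw, hdxw⟩ | ⟨w, f, hwH, hhw, hdxw⟩
        · -- sim g x
          have hIgx : infoSet H sim g = infoSet H sim x := info_eq ht he hg hx hgx
          have e1 : EEdF H sim r h = EEdF H sim r g := by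
            rw [hdh, EEdF_concat H sim r g e hrg.length_le, if_neg]
            rw [not_ne_iff, ← hdh]
            exact hIgx.trans hIhx.symm
          rw [e1]
          exact IHn g x r s (by omega) hg hx hrR hsR hrg hsx hgx
        · -- sim g w, x = w ++ [f]
          have hsw : s <+: w := by
            rcases List.prefix_concat_iff.mp (hdxw ▸ hsx) with h1 | h1
            · exact absurd (h1.trans hdxw.symm) hsxeq
            · exact h1
          have hIgw : infoSet H sim g = infoSet H sim w := info_eq ht he hg hwH hgw
          have hxlen : x.length = w.length + 1 := by rw [hdxw]; simp
          have IH : EEdF H sim r g = EEdF H sim s w :=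
            IHn g w r s (by omega) hg hwH hrR hsR hrg hsw hgw
          have hIe : infoSet H sim (g ++ [e]) = infoSet H sim (w ++ [f]) := by
            rw [← hdh, ← hdxw]; exact hIhx
          rw [hdh, hdxw, EEdF_concat H sim r g e hrg.length_le,
            EEdF_concat H sim s w f hsw.length_le]
          by_cases hc : infoSet H sim g ≠ infoSet H sim (g ++ [e])
          · rw [if_pos hc, if_pos (by rw [← hIgw, ← hIe]; exact hc), IH, hIe]
          · rw [if_neg hc, if_neg (by rw [← hIgw, ← hIe]; exact hc), IH]
        · -- sim h w, x = w ++ [f]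
          have hhw' : sim h w := by rw [hdh]; exact hhw
          have hsw : s <+: w := by
            rcases List.prefix_concat_iff.mp (hdxw ▸ hsx) with h1 | h1
            · exact absurd (h1.trans hdxw.symm) hsxeq
            · exact h1
          have hxlen : x.length = w.length + 1 := by rw [hdxw]; simp
          have IH : EEdF H sim r h = EEdF H sim s w :=
            IHn h w r s (by omega) hh hwH hrR hsR hrh hsw hhw'
          have hIwx : infoSet H sim w = infoSet H sim x := (info_eq ht he hh hwH hhw').symm.trans hIhx
          have e2 : EEdF H sim s x = EEdF H sim s w := by
            rw [hdxw, EEdF_concat H sim s w f hsw.length_le, if_neg]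
            rw [not_ne_iff, ← hdxw]
            exact hIwx
          rw [IH, e2]

end PRMain

/-- An introspective, initially synchronous ETL forest has PR (PR_ee and PR_hcl)
iff it has PR_hcl. -/
theorem forest_pr_iff_prhcl {E : Type*} [Fintype E] (H Roots : Set (List E))
    (sim : List E → List E → Prop) (hF : ForestFrame H Roots)
    (hsync : InitSync H Roots sim)
    (ht : TransOn H sim) (he : EuclOn H sim) :
    (PReeF H Roots sim ∧ PRhcl H sim) ↔ PRhcl H sim := by
  constructor
  · rintro ⟨_, hp⟩
    exact hp
  · intro hcl
    refine ⟨?_, hcl⟩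
    intro h h' r r' hh hh' hrR hr'R hrh hr'h' hsim
    exact mainlem hF hsync ht he hcl (h.length + h'.length) h h' r r' le_rfl hh hh' hrR
      hr'R hrh hr'h' hsim
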